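/- The merge (interleaving) of toric words α_0,…,α_{L−1}, defined by α(nL + r) = α_r(n) for 0 ≤ r < L, is toric. -/

import Mathlib

/-- `w` occurs in the infinite word `α` at position `n`. -/
def Occurs {A : Type*} (w : List A) (α : ℕ → A) (n : ℕ) : Prop :=
  ∀ i : Fin w.length, α (n + i) = w.get i

/-- `α` is the coding of the orbit of `Γ` in the torus with respect to the
pairwise disjoint target sets `S a`, each with finitely many connected components. -/
def Generates {A : Type*} {d : ℕ} (Γ : Fin d → Circle)
    (S : A → Set (Fin d → Circle)) (α : ℕ → A) : Prop :=
  Pairwise (fun a b => Disjoint (S a) (S b)) ∧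
  (∀ a, Finite (ConnectedComponents ↥(S a))) ∧
  ∀ (n : ℕ) (a : A), α n = a ↔ Γ ^ n ∈ S a

/-- Toric word. -/
def IsToricWord {A : Type*} (α : ℕ → A) : Prop :=
  ∃ d : ℕ, 0 < d ∧ ∃ (Γ : Fin d → Circle) (S : A → Set (Fin d → Circle)),
    Generates Γ S α

/-- Toric word with open target sets (class 𝒯_O). -/
def IsOpenToricWord {A : Type*} (α : ℕ → A) : Prop :=
  ∃ d : ℕ, 0 < d ∧ ∃ (Γ : Fin d → Circle) (S : A → Set (Fin d → Circle)),
    Generates Γ S α ∧ ∀ a, IsOpen (S a)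

/-- Semialgebraic subset of `ι → ℝ`: a finite union of finite intersections of
sets defined by (strict or non-strict) polynomial inequalities. -/
def IsSemialgebraicSet {ι : Type*} (X : Set (ι → ℝ)) : Prop :=
  ∃ (k l : ℕ) (p : Fin k → Fin l → MvPolynomial ι ℝ) (strict : Fin k → Fin l → Bool),
    X = ⋃ i, ⋂ j, {x | if strict i j then 0 < MvPolynomial.eval x (p i j)
                       else 0 ≤ MvPolynomial.eval x (p i j)}

/-- Real-imaginary coordinates of a point of the torus `𝕋^d`, as a point of `ℝ^{2d}`. -/
def circleEmbed {d : ℕ} (z : Fin d → Circle) : Fin d × Fin 2 → ℝ :=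
  fun p => if p.2 = 0 then ((z p.1 : ℂ)).re else ((z p.1 : ℂ)).im

/-- A subset of `𝕋^d` is semialgebraic if the corresponding subset of `ℝ^{2d}` is. -/
def IsSemialgebraicCircleSet {d : ℕ} (S : Set (Fin d → Circle)) : Prop :=
  IsSemialgebraicSet (circleEmbed '' S)

/-- Toric word with semialgebraic target sets (class 𝒯_SA). -/
def IsSAToricWord {A : Type*} (α : ℕ → A) : Prop :=
  ∃ d : ℕ, 0 < d ∧ ∃ (Γ : Fin d → Circle) (S : A → Set (Fin d → Circle)),
    Generates Γ S α ∧ ∀ a, IsSemialgebraicCircleSet (S a)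

/-- Almost-periodic word: for every finite word `w` there is a bound `R` such that
either `w` does not occur in `α[R,∞)`, or `w` occurs in every factor of `α` of length `R`. -/
def AlmostPeriodic {A : Type*} (α : ℕ → A) : Prop :=
  ∀ w : List A, ∃ R : ℕ,
    (∀ n, R ≤ n → ¬ Occurs w α n) ∨
    (∀ n, ∃ m, n ≤ m ∧ m + w.length ≤ n + R ∧ Occurs w α m)

/-- Strongly almost-periodic (uniformly recurrent) word: every finite word either never
occurs, or occurs in every sufficiently long factor. -/
def StronglyAlmostPeriodic {A : Type*} (α : ℕ → A) : Prop :=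
  ∀ w : List A,
    (∀ n, ¬ Occurs w α n) ∨
    ∃ R : ℕ, ∀ n, ∃ m, n ≤ m ∧ m + w.length ≤ n + R ∧ Occurs w α m


section MergeToricAux

open Real Set


private lemma circle_exp_pow (x : ℝ) (n : ℕ) : Circle.exp x ^ n = Circle.exp (n * x) := by
  induction n with
  | zero => simp
  | succ n ih =>
    rw [pow_succ, ih, ← Circle.exp_add]
    congr 1
    push_cast
    ring

private lemma circle_root (L : ℕ) (hL : 0 < L) (g : Circle) : ∃ b : Circle, b ^ L = g := by
  refine ⟨Circle.exp (Complex.arg (g : ℂ) / L), ?_⟩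
  rw [circle_exp_pow]
  rw [show (L : ℝ) * (Complex.arg (g : ℂ) / L) = Complex.arg (g : ℂ) by
    field_simp]
  exact Circle.exp_arg g

private lemma zeta_inj (L : ℕ) (hL : 0 < L) (r r' : Fin L)
    (h : Circle.exp (2 * π / L) ^ (r : ℕ) = Circle.exp (2 * π / L) ^ (r' : ℕ)) : r = r' := by
  rw [circle_exp_pow, circle_exp_pow] at h
  obtain ⟨m, hm⟩ := Circle.exp_eq_exp.mp h
  have hπ : (2 * π) ≠ 0 := by positivity
  have hLne : (L : ℝ) ≠ 0 := Nat.cast_ne_zero.mpr hL.ne'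
  have key : ((r : ℕ) : ℝ) - ((r' : ℕ) : ℝ) = m * L := by
    field_simp at hm
    have h2 : (((r : ℕ) : ℝ) - ((r' : ℕ) : ℝ) - m * L) * (2 * π) = 0 * (2 * π) := by
      ring_nf
      ring_nf at hm
      linear_combination (2 * π) * hm
    have := mul_right_cancel₀ hπ h2
    linarith
  have keyz : ((r : ℕ) : ℤ) - ((r' : ℕ) : ℤ) = m * L := by exact_mod_cast key
  have hr : ((r : ℕ) : ℤ) < L := by exact_mod_cast r.isLt
  have hr' : ((r' : ℕ) : ℤ) < L := by exact_mod_cast r'.isLt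
  have hr0 : (0:ℤ) ≤ ((r : ℕ) : ℤ) := by positivity
  have hr0' : (0:ℤ) ≤ ((r' : ℕ) : ℤ) := by positivity
  have hLz : (0:ℤ) < L := by exact_mod_cast hL
  have hm0 : m = 0 := by
    rcases lt_trichotomy m 0 with hc | hc | hc
    · nlinarith [Int.add_one_le_of_lt hc]
    · exact hc
    · nlinarith [Int.add_one_le_of_lt hc]
  rw [hm0] at keyz
  have : ((r : ℕ) : ℤ) = ((r' : ℕ) : ℤ) := by linarith
  exact Fin.ext (by exact_mod_cast this)

private lemma finite_components_of_union {X : Type*} [TopologicalSpace X] {ι : Type*} [Finite ι]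
    {S : Set X} {C : ι → Set X} (hC : ∀ i, IsPreconnected (C i)) (hU : S = ⋃ i, C i) :
    Finite (ConnectedComponents ↥S) := by
  classical
  cases isEmpty_or_nonempty ↥S with
  | inl he =>
    haveI : Finite ↥S := Finite.of_subsingleton
    exact Finite.of_surjective _ ConnectedComponents.surjective_coe
  | inr hne =>
    have hsub : ∀ i, C i ⊆ S := by
      intro i
      rw [hU]
      exact subset_iUnion C i
    have hcompfix : ∀ (i : ι) (u v : ↥S), (u : X) ∈ C i → (v : X) ∈ C i →
        connectedComponent u = connectedComponent v := by
      intro i u v hu hv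
      have hpre : IsPreconnected ((Subtype.val : ↥S → X) ⁻¹' C i) := by
        rw [← Topology.IsInducing.subtypeVal.isPreconnected_image]
        rw [Subtype.image_preimage_coe, inter_eq_right.mpr (hsub i)]
        exact hC i
      have h1 : (Subtype.val ⁻¹' C i : Set ↥S) ⊆ connectedComponent u :=
        hpre.subset_connectedComponent hu
      exact connectedComponent_eq (h1 hv)
    set g : ι → ConnectedComponents ↥S := fun i =>
      if h : (C i).Nonempty then
        ConnectedComponents.mk ⟨h.choose, hsub i h.choose_spec⟩
      else ConnectedComponents.mk (Classical.arbitrary ↥S)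
    refine Finite.of_surjective g ?_
    intro q
    obtain ⟨x, rfl⟩ := ConnectedComponents.surjective_coe q
    have hx : (x : X) ∈ ⋃ i, C i := by rw [← hU]; exact x.2
    obtain ⟨i, hi⟩ := mem_iUnion.mp hx
    refine ⟨i, ?_⟩
    have hne' : (C i).Nonempty := ⟨x, hi⟩
    simp only [g, dif_pos hne']
    exact ConnectedComponents.coe_eq_coe.mpr
      (hcompfix i ⟨hne'.choose, hsub i hne'.choose_spec⟩ x hne'.choose_spec hi)

private lemma preconnected_cylinder {N d : ℕ} {B : Set (Fin d → Circle)} (hB : IsPreconnected B)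
    (ψ : Fin d → Fin (N + 1)) (hψ : Function.Injective ψ) (h0 : ∀ j, ψ j ≠ 0)
    (c0 : Circle) (t : Fin d → Circle) :
    IsPreconnected {x : Fin (N + 1) → Circle |
      x 0 = c0 ∧ (fun j => t j * x (ψ j)) ∈ B} := by
  classical
  set Φ : (Fin d → Circle) × (Fin (N + 1) → Circle) → (Fin (N + 1) → Circle) :=
    fun p i => if i = 0 then c0
      else if h : ∃ j, ψ j = i then (t h.choose)⁻¹ * p.1 h.choose else p.2 i with hΦ
  have hcont : Continuous Φ := by
    apply continuous_pi
    intro i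
    simp only [Φ]
    split_ifs with h1 h2
    · exact continuous_const
    · exact continuous_const.mul ((continuous_apply _).comp continuous_fst)
    · exact (continuous_apply i).comp continuous_snd
  have himg : {x : Fin (N + 1) → Circle | x 0 = c0 ∧ (fun j => t j * x (ψ j)) ∈ B}
      = Φ '' (B ×ˢ (univ : Set (Fin (N + 1) → Circle))) := by
    ext x
    constructor
    · rintro ⟨hx0, hxB⟩
      refine ⟨(fun j => t j * x (ψ j), x), ⟨hxB, trivial⟩, ?_⟩
      funext i
      simp only [Φ]
      split_ifs with h1 h2
      · rw [h1]; exact hx0.symm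
      · rw [inv_mul_cancel_left, h2.choose_spec]
      · rfl
    · rintro ⟨⟨y, z⟩, ⟨hy, -⟩, rfl⟩
      constructor
      · show Φ (y, z) 0 = c0
        simp [Φ]
      · show (fun j => t j * Φ (y, z) (ψ j)) ∈ B
        have heq : (fun j => t j * Φ (y, z) (ψ j)) = y := by
          funext j
          simp only [Φ]
          rw [if_neg (h0 j)]
          have hex : ∃ j', ψ j' = ψ j := ⟨j, rfl⟩
          rw [dif_pos hex]
          have hch : hex.choose = j := hψ hex.choose_spec
          rw [hch, mul_inv_cancel_left]
        rw [heq]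
        exact hy
  rw [himg]
  haveI : ConnectedSpace Circle :=
    Function.Surjective.connectedSpace (fun z => ⟨_, Circle.exp_arg z⟩) Circle.exp.continuous
  exact (hB.prod isPreconnected_univ).image _ hcont.continuousOn

private theorem merge_of_toric_is_toric' {A : Type} (L : ℕ) (hL : 0 < L)
    (αs : Fin L → ℕ → A) (α : ℕ → A)
    (hmerge : ∀ (n : ℕ) (r : Fin L), α (n * L + (r : ℕ)) = αs r n)
    (h : ∀ r, ∃ d : ℕ, 0 < d ∧ ∃ (Γ : Fin d → Circle) (S : A → Set (Fin d → Circle)),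
      (Pairwise (fun a b => Disjoint (S a) (S b)) ∧
      (∀ a, Finite (ConnectedComponents ↥(S a))) ∧
      ∀ (n : ℕ) (a : A), αs r n = a ↔ Γ ^ n ∈ S a)) :
    ∃ d : ℕ, 0 < d ∧ ∃ (Γ : Fin d → Circle) (S : A → Set (Fin d → Circle)),
      (Pairwise (fun a b => Disjoint (S a) (S b)) ∧
      (∀ a, Finite (ConnectedComponents ↥(S a))) ∧
      ∀ (n : ℕ) (a : A), α n = a ↔ Γ ^ n ∈ S a) := by
  classical
  choose d hd Γ S hGen using h
  set D := Finset.univ.sup d with hD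
  have hdD : ∀ r, d r ≤ D := fun r => Finset.le_sup (Finset.mem_univ r)
  set N := L * D with hN
  set ζ : Circle := Circle.exp (2 * π / L) with hζ
  have hζL : ζ ^ L = 1 := by
    rw [hζ, circle_exp_pow, show (L:ℝ) * (2 * π / L) = 2 * π by
      field_simp, Circle.exp_two_pi]
  have hζinj : ∀ r r' : Fin L, ζ ^ (r : ℕ) = ζ ^ (r' : ℕ) → r = r' := by
    intro r r' hh
    rw [hζ] at hh
    exact zeta_inj L hL r r' hh
  choose b hb using fun r (j : Fin (d r)) => circle_root L hL (Γ r j)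
  set ψ : (r : Fin L) → Fin (d r) → Fin (N + 1) :=
    fun r j => Fin.succ (finProdFinEquiv (r, Fin.castLE (hdD r) j)) with hψdef
  have hψinj : ∀ r, Function.Injective (ψ r) := by
    intro r j j' hjj
    have h1 := Fin.succ_injective _ hjj
    have h2 := finProdFinEquiv.injective h1
    have h3 : (Fin.castLE (hdD r) j) = (Fin.castLE (hdD r) j') := congrArg Prod.snd h2
    exact Fin.castLE_injective _ h3
  have hψ0 : ∀ r j, ψ r j ≠ 0 := fun r j => Fin.succ_ne_zero _
  set g : Fin N → Circle := fun k =>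
    if hk : ((finProdFinEquiv.symm k).2 : ℕ) < d (finProdFinEquiv.symm k).1 then
      b (finProdFinEquiv.symm k).1 ⟨((finProdFinEquiv.symm k).2 : ℕ), hk⟩ else 1 with hg
  set Γ' : Fin (N + 1) → Circle := Fin.cons ζ g with hΓ'
  have hΓ'0 : Γ' 0 = ζ := by rw [hΓ']; exact Fin.cons_zero _ _
  have hΓ'ψ : ∀ r j, Γ' (ψ r j) = b r j := by
    intro r j
    rw [hΓ', hψdef]
    beta_reduce
    rw [Fin.cons_succ, hg]
    beta_reduce
    set p := finProdFinEquiv.symm (finProdFinEquiv (r, Fin.castLE (hdD r) j)) with hp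
    have hsymm : p = (r, Fin.castLE (hdD r) j) := by rw [hp]; exact Equiv.symm_apply_apply _ _
    clear_value p
    subst hsymm
    rw [dif_pos (show ((Fin.castLE (hdD r) j : Fin D) : ℕ) < d r from j.isLt)]
    exact congrArg (b r) (Fin.ext rfl)
  set S' : A → Set (Fin (N + 1) → Circle) := fun a =>
    ⋃ r : Fin L, {x | x 0 = ζ ^ (r : ℕ) ∧
      (fun j => (b r j)⁻¹ ^ (r : ℕ) * x (ψ r j)) ∈ S r a} with hS'
  refine ⟨N + 1, Nat.succ_pos N, Γ', S', ?_, ?_, ?_⟩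
  · -- pairwise disjoint
    intro a a' hne
    rw [Set.disjoint_left]
    intro x hxa hxa'
    rw [hS'] at hxa hxa'
    obtain ⟨r, hr0, hrB⟩ := Set.mem_iUnion.mp hxa
    obtain ⟨r', hr'0, hr'B⟩ := Set.mem_iUnion.mp hxa'
    have hrr : r' = r := hζinj r' r (hr'0.symm.trans hr0)
    subst hrr
    exact (Set.disjoint_left.mp ((hGen r').1 hne) hrB) hr'B
  · -- finitely many connected components
    intro a
    haveI : ∀ r : Fin L, Finite (ConnectedComponents ↥(S r a)) := fun r => (hGen r).2.1 a
    set C : (Σ r : Fin L, ConnectedComponents ↥(S r a)) → Set (Fin (N + 1) → Circle) :=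
      fun p => {x | x 0 = ζ ^ (p.1 : ℕ) ∧
        (fun j => (b p.1 j)⁻¹ ^ (p.1 : ℕ) * x (ψ p.1 j)) ∈
          Subtype.val '' (ConnectedComponents.mk ⁻¹' {p.2})} with hC
    have hCpre : ∀ p, IsPreconnected (C p) := by
      rintro ⟨r, c⟩
      obtain ⟨z, rfl⟩ := ConnectedComponents.surjective_coe c
      have hpre : IsPreconnected (Subtype.val ''
          (ConnectedComponents.mk ⁻¹' {(z : ConnectedComponents ↥(S r a))} : Set ↥(S r a))) := by
        rw [connectedComponents_preimage_singleton]
        exact Topology.IsInducing.subtypeVal.isPreconnected_image.mpr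
          isPreconnected_connectedComponent
      exact preconnected_cylinder hpre (ψ r) (hψinj r) (hψ0 r) _ _
    have hU : S' a = ⋃ p, C p := by
      rw [hS']
      ext x
      simp only [Set.mem_iUnion, Set.mem_setOf_eq, hC]
      constructor
      · rintro ⟨r, hr0, hrB⟩
        exact ⟨⟨r, ConnectedComponents.mk ⟨_, hrB⟩⟩, hr0, ⟨⟨_, hrB⟩, rfl, rfl⟩⟩
      · rintro ⟨⟨r, c⟩, hr0, ⟨z, hz, hzeq⟩⟩
        exact ⟨r, hr0, hzeq ▸ z.2⟩
    exact finite_components_of_union hCpre hU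
  · -- generation
    intro m a
    obtain ⟨n, rr, hrlt, rfl⟩ : ∃ n rr, rr < L ∧ m = n * L + rr :=
      ⟨m / L, m % L, Nat.mod_lt m hL, by rw [mul_comm]; exact (Nat.div_add_mod m L).symm⟩
    set r : Fin L := ⟨rr, hrlt⟩ with hrdef
    have hα : α (n * L + rr) = αs r n := hmerge n r
    rw [hα, (hGen r).2.2 n a]
    have hx0 : (Γ' ^ (n * L + rr)) 0 = ζ ^ (r : ℕ) := by
      rw [Pi.pow_apply, hΓ'0, pow_add, mul_comm n L, pow_mul, hζL, one_pow, one_mul]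
    have hfun : (fun j => (b r j)⁻¹ ^ (r : ℕ) * (Γ' ^ (n * L + rr)) (ψ r j)) = Γ r ^ n := by
      funext j
      rw [Pi.pow_apply, Pi.pow_apply, hΓ'ψ, pow_add, mul_comm n L, pow_mul, hb]
      show (b r j)⁻¹ ^ rr * (Γ r j ^ n * b r j ^ rr) = Γ r j ^ n
      rw [inv_pow, mul_comm (Γ r j ^ n), ← mul_assoc, inv_mul_cancel, one_mul]
    constructor
    · intro hSr
      refine Set.mem_iUnion.mpr ⟨r, hx0, ?_⟩
      rw [hfun]
      exact hSr
    · intro hmem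
      obtain ⟨r', hr'0, hr'B⟩ := Set.mem_iUnion.mp hmem
      have hrr' : r' = r := hζinj r' r (hr'0.symm.trans hx0)
      subst hrr'
      rwa [hfun] at hr'B

end MergeToricAux

/-- The merge (interleaving) of toric words is toric. -/
theorem merge_of_toric_is_toric {A : Type} (L : ℕ) (hL : 0 < L)
    (αs : Fin L → ℕ → A) (α : ℕ → A)
    (hmerge : ∀ (n : ℕ) (r : Fin L), α (n * L + (r : ℕ)) = αs r n)
    (h : ∀ r, IsToricWord (αs r)) :
    IsToricWord α :=
  merge_of_toric_is_toric' L hL αs α hmerge h
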